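/- arXiv:1805.04884 — 2 statements merged into one kernel-verified Lean document; each statement's English description precedes it below -/
import Mathlib

section
/- Let A ∈ ℕ^m and D_A the set of minimal-inversion left coset representatives of the stabilizer H_A ≤ S_m. For any τ, τ' ∈ D_A there exists a finite sequence τ_0 = τ', τ_1, ..., τ_l = τ with all τ_j ∈ D_A such that τ_{j+1} τ_j^{-1} is a transposition for each 0 ≤ j < l. -/
open Equiv Finset

def winv {m : ℕ} {α : Type*} [LinearOrder α] (w : Fin m → α) : ℕ :=
  (Finset.univ.filter (fun p : Fin m × Fin m => p.1 < p.2 ∧ w p.2 < w p.1)).card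

lemma swap_val {m : ℕ} (p q z : Fin m) :
    ((Equiv.swap p q z : Fin m) : ℕ) =
      if (z : ℕ) = p then (q : ℕ) else if (z : ℕ) = q then (p : ℕ) else (z : ℕ) := by
  rcases eq_or_ne z p with rfl | hzp
  · simp [Equiv.swap_apply_left]
  · rcases eq_or_ne z q with rfl | hzq
    · rw [Equiv.swap_apply_right, if_neg (fun e => hzp (Fin.ext e)), if_pos rfl]
    · rw [Equiv.swap_apply_of_ne_of_ne hzp hzq, if_neg (fun e => hzp (Fin.ext e)),
        if_neg (fun e => hzq (Fin.ext e))]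

lemma swap_lt_iff {m : ℕ} (p q x y : Fin m) (hq : (q : ℕ) = p + 1)
    (h1 : ¬(x = p ∧ y = q)) (h2 : ¬(x = q ∧ y = p)) :
    (Equiv.swap p q x < Equiv.swap p q y ↔ x < y) := by
  have H1 : ¬((x : ℕ) = p ∧ (y : ℕ) = q) := by simpa only [Fin.ext_iff] using h1
  have H2 : ¬((x : ℕ) = q ∧ (y : ℕ) = p) := by simpa only [Fin.ext_iff] using h2
  rw [Fin.lt_def, Fin.lt_def, swap_val, swap_val]
  split_ifs <;> omega

lemma winv_comp_swap {m : ℕ} {α : Type*} [LinearOrder α] (w : Fin m → α) (p q : Fin m)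
    (hq : (q : ℕ) = p + 1) (h : w p < w q) :
    winv (w ∘ Equiv.swap p q) = winv w + 1 := by
  have hqp : q ≠ p := fun e => by rw [e] at hq; omega
  set s := Equiv.swap p q with hs
  have hss : ∀ z : Fin m, s (s z) = z := fun z => Equiv.swap_apply_self p q z
  have step1 : winv (w ∘ s) =
      (Finset.univ.filter (fun z : Fin m × Fin m => s z.1 < s z.2 ∧ w z.2 < w z.1)).card := by
    unfold winv
    apply Finset.card_bij' (fun z _ => (s z.1, s z.2)) (fun z _ => (s z.1, s z.2))
    · intro a ha
      simp only [Finset.mem_filter, Finset.mem_univ, true_and, Function.comp_apply] at ha ⊢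
      exact ⟨by simpa [hss] using ha.1, by simpa [hss] using ha.2⟩
    · intro a ha
      simp only [Finset.mem_filter, Finset.mem_univ, true_and, Function.comp_apply] at ha ⊢
      exact ⟨by simpa [hss] using ha.1, by simpa [hss] using ha.2⟩
    · intro a _; simp [hss]
    · intro a _; simp [hss]
  rw [step1]
  have hset : (Finset.univ.filter (fun z : Fin m × Fin m => s z.1 < s z.2 ∧ w z.2 < w z.1)) =
      insert (q, p) (Finset.univ.filter (fun z : Fin m × Fin m => z.1 < z.2 ∧ w z.2 < w z.1)) := by
    ext ⟨x, y⟩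
    simp only [Finset.mem_filter, Finset.mem_univ, true_and, Finset.mem_insert, Prod.mk.injEq]
    constructor
    · rintro ⟨h1, h2⟩
      by_cases hc : x = q ∧ y = p
      · exact Or.inl hc
      · right
        refine ⟨?_, h2⟩
        by_cases hc2 : x = p ∧ y = q
        · exfalso; obtain ⟨rfl, rfl⟩ := hc2; exact absurd h2 (not_lt.2 h.le)
        · exact (swap_lt_iff p q x y hq hc2 hc).1 h1
    · rintro (⟨rfl, rfl⟩ | ⟨h1, h2⟩)
      · refine ⟨?_, h⟩
        rw [hs, Equiv.swap_apply_right, Equiv.swap_apply_left]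
        exact Fin.lt_def.2 (by omega)
      · refine ⟨?_, h2⟩
        by_cases hc2 : x = p ∧ y = q
        · obtain ⟨rfl, rfl⟩ := hc2; exact absurd h2 (not_lt.2 h.le)
        · by_cases hc : x = q ∧ y = p
          · obtain ⟨rfl, rfl⟩ := hc
            exact absurd h1 (not_lt.2 (Fin.le_def.2 (by omega)))
          · exact (swap_lt_iff p q x y hq hc2 hc).2 h1
  rw [hset, Finset.card_insert_of_notMem]
  · rfl
  · simp only [Finset.mem_filter, Finset.mem_univ, true_and, not_and]
    intro hlt
    exact absurd hlt (not_lt.2 (Fin.le_def.2 (by omega)))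

def invNum {m : ℕ} (σ : Equiv.Perm (Fin m)) : ℕ :=
  (Finset.univ.filter (fun p : Fin m × Fin m => p.1 < p.2 ∧ σ p.2 < σ p.1)).card

theorem Equiv.Perm.apply_inv_self {α : Type*} (f : Equiv.Perm α) (x : α) : f (f⁻¹ x) = x :=
  f.apply_symm_apply x

theorem Equiv.Perm.inv_apply_self {α : Type*} (f : Equiv.Perm α) (x : α) : f⁻¹ (f x) = x :=
  f.symm_apply_apply x

lemma invNum_eq_winv {m : ℕ} (σ : Equiv.Perm (Fin m)) : invNum σ = winv (⇑σ) := rfl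

lemma coe_mul_swap {m : ℕ} (σ : Equiv.Perm (Fin m)) (p q : Fin m) :
    ⇑(σ * Equiv.swap p q) = ⇑σ ∘ ⇑(Equiv.swap p q) := rfl

/-- adjacent swap, increasing case -/
lemma invNum_swap_inc {m : ℕ} (σ : Equiv.Perm (Fin m)) (p q : Fin m)
    (hq : (q : ℕ) = p + 1) (h : σ p < σ q) :
    invNum (σ * Equiv.swap p q) = invNum σ + 1 := by
  rw [invNum_eq_winv, invNum_eq_winv, coe_mul_swap]
  exact winv_comp_swap (⇑σ) p q hq h

/-- adjacent swap, decreasing case -/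
lemma invNum_swap_dec {m : ℕ} (σ : Equiv.Perm (Fin m)) (p q : Fin m)
    (hq : (q : ℕ) = p + 1) (h : σ q < σ p) :
    invNum (σ * Equiv.swap p q) + 1 = invNum σ := by
  have h2 : (σ * Equiv.swap p q) p < (σ * Equiv.swap p q) q := by
    simpa [Equiv.Perm.mul_apply, Equiv.swap_apply_left, Equiv.swap_apply_right] using h
  have := invNum_swap_inc (σ * Equiv.swap p q) p q hq h2
  rw [mul_assoc, Equiv.swap_mul_self, mul_one] at this
  omega

lemma invNum_swap_lt_aux {m : ℕ} : ∀ n : ℕ, ∀ (σ : Equiv.Perm (Fin m)) (p q : Fin m),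
    (q : ℕ) - p = n → p < q → σ q < σ p → invNum (σ * Equiv.swap p q) < invNum σ := by
  intro n
  induction n using Nat.strong_induction_on with
  | _ n IH =>
    intro σ p q hn hpq h
    have hpq' : (p : ℕ) < q := hpq
    rcases eq_or_ne n 1 with rfl | hn1
    · have hq : (q : ℕ) = p + 1 := by omega
      have := invNum_swap_dec σ p q hq h
      omega
    · have hn2 : 2 ≤ n := by omega
      have hkm : (p : ℕ) + 1 < m := by have := q.isLt; omega
      set k : Fin m := ⟨(p : ℕ) + 1, hkm⟩ with hkdef
      have hk : (k : ℕ) = p + 1 := rfl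
      have hpk : p ≠ k := fun e => by rw [e] at hk; omega
      have hkq : k ≠ q := fun e => by rw [e] at hk; omega
      have hqp : q ≠ p := hpq.ne'
      have hqk : q ≠ k := hkq.symm
      have hswap : Equiv.swap p k * Equiv.swap k q * Equiv.swap p k = Equiv.swap p q := by
        have hpq2 : p ≠ q := hpq.ne
        ext x
        simp only [Equiv.Perm.mul_apply]
        rcases eq_or_ne x p with hxp | hxp
        · rw [hxp, Equiv.swap_apply_left p k, Equiv.swap_apply_left k q,
            Equiv.swap_apply_of_ne_of_ne hqp hqk, Equiv.swap_apply_left p q]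
        · rcases eq_or_ne x q with hxq | hxq
          · rw [hxq, Equiv.swap_apply_of_ne_of_ne hqp hqk, Equiv.swap_apply_right k q,
              Equiv.swap_apply_right p k, Equiv.swap_apply_right p q]
          · rcases eq_or_ne x k with hxk | hxk
            · rw [hxk, Equiv.swap_apply_right p k, Equiv.swap_apply_of_ne_of_ne hpk hpq2,
                Equiv.swap_apply_left p k, Equiv.swap_apply_of_ne_of_ne hpk.symm hkq]
            · rw [Equiv.swap_apply_of_ne_of_ne hxp hxk, Equiv.swap_apply_of_ne_of_ne hxk hxq,
                Equiv.swap_apply_of_ne_of_ne hxp hxk, Equiv.swap_apply_of_ne_of_ne hxp hxq]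
      have hmain : σ * Equiv.swap p q = ((σ * Equiv.swap p k) * Equiv.swap k q) * Equiv.swap p k := by
        rw [← hswap]; simp [mul_assoc]
      set σ1 := σ * Equiv.swap p k with hσ1
      set σ2 := σ1 * Equiv.swap k q with hσ2
      have hσ1p : σ1 p = σ k := by simp [hσ1, Equiv.Perm.mul_apply, Equiv.swap_apply_left]
      have hσ1k : σ1 k = σ p := by simp [hσ1, Equiv.Perm.mul_apply, Equiv.swap_apply_right]
      have hσ1q : σ1 q = σ q := by
        simp [hσ1, Equiv.Perm.mul_apply, Equiv.swap_apply_of_ne_of_ne hqp hqk]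
      have hσ2p : σ2 p = σ k := by
        rw [hσ2, Equiv.Perm.mul_apply, Equiv.swap_apply_of_ne_of_ne hpk hpq.ne, hσ1p]
      have hσ2k : σ2 k = σ q := by
        rw [hσ2, Equiv.Perm.mul_apply, Equiv.swap_apply_left, hσ1q]
      have hkltq : k < q := by rw [Fin.lt_def]; exact Nat.lt_of_lt_of_le (by omega) (le_refl _)
      have hIH : invNum σ2 < invNum σ1 := by
        apply IH (n - 1) (by omega) σ1 k q (by omega) hkltq
        rw [hσ1q, hσ1k]; exact h
      have hne_kq : σ k ≠ σ q := fun e => hkq (σ.injective e)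
      have hne_kp : σ k ≠ σ p := fun e => hpk (σ.injective e).symm
      rw [hmain]
      rcases lt_or_gt_of_ne hne_kq with hA | hB
      · -- σ k < σ q < σ p
        have h1 : invNum σ1 + 1 = invNum σ := by
          exact invNum_swap_dec σ p k hk (lt_trans hA h)
        have h3 : invNum (σ2 * Equiv.swap p k) = invNum σ2 + 1 := by
          apply invNum_swap_inc σ2 p k hk; rw [hσ2p, hσ2k]; exact hA
        omega
      · rcases lt_or_gt_of_ne hne_kp with hB1 | hB2
        · have h1 : invNum σ1 + 1 = invNum σ := invNum_swap_dec σ p k hk hB1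
          have h3 : invNum (σ2 * Equiv.swap p k) + 1 = invNum σ2 := by
            apply invNum_swap_dec σ2 p k hk; rw [hσ2p, hσ2k]; exact hB
          omega
        · have h1 : invNum σ1 = invNum σ + 1 := invNum_swap_inc σ p k hk hB2
          have h3 : invNum (σ2 * Equiv.swap p k) + 1 = invNum σ2 := by
            apply invNum_swap_dec σ2 p k hk; rw [hσ2p, hσ2k]; exact hB
          omega

lemma invNum_swap_lt {m : ℕ} (σ : Equiv.Perm (Fin m)) (p q : Fin m)
    (hpq : p < q) (h : σ q < σ p) : invNum (σ * Equiv.swap p q) < invNum σ :=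
  invNum_swap_lt_aux ((q : ℕ) - p) σ p q rfl hpq h

def inDA {m : ℕ} (A : Fin m → ℕ) (σ : Equiv.Perm (Fin m)) : Prop :=
  ∀ ρ : Equiv.Perm (Fin m),
    (∃ ξ : Equiv.Perm (Fin m), (∀ l, A (ξ l) = A l) ∧ ρ = σ * ξ) →
    invNum σ ≤ invNum ρ

/-- block-increasing -/
def BInc {m : ℕ} (A : Fin m → ℕ) (σ : Equiv.Perm (Fin m)) : Prop :=
  ∀ i j : Fin m, i < j → A i = A j → σ i < σ j

lemma swap_stab {m : ℕ} (A : Fin m → ℕ) (i j : Fin m) (hA : A i = A j) :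
    ∀ l, A (Equiv.swap i j l) = A l := by
  intro l
  rcases eq_or_ne l i with rfl | hli
  · rw [Equiv.swap_apply_left]; exact hA.symm
  · rcases eq_or_ne l j with rfl | hlj
    · rw [Equiv.swap_apply_right]; exact hA
    · rw [Equiv.swap_apply_of_ne_of_ne hli hlj]

lemma inDA_BInc {m : ℕ} (A : Fin m → ℕ) (σ : Equiv.Perm (Fin m)) (h : inDA A σ) :
    BInc A σ := by
  intro i j hij hA
  by_contra hc
  have hne : σ i ≠ σ j := fun e => hij.ne (σ.injective e)
  have hlt : σ j < σ i := lt_of_le_of_ne (not_lt.1 hc) hne.symm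
  have h1 := invNum_swap_lt σ i j hij hlt
  have h2 := h (σ * Equiv.swap i j) ⟨Equiv.swap i j, swap_stab A i j hA, rfl⟩
  omega

/-- uniqueness: block increasing elements with the same word coincide -/
lemma BInc_unique_aux {m : ℕ} (A : Fin m → ℕ) (σ σ' : Equiv.Perm (Fin m))
    (hσ : BInc A σ) (hσ' : BInc A σ') (hw : ∀ x, A (σ⁻¹ x) = A (σ'⁻¹ x))
    (a : Fin m) (IH : ∀ b : Fin m, b < a → σ⁻¹ b = σ'⁻¹ b)
    (hlt : σ⁻¹ a < σ'⁻¹ a) : False := by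
  set x := σ⁻¹ a with hx
  set x' := σ'⁻¹ a with hx'
  have hAxx : A x = A x' := by rw [hx, hx']; exact hw a
  have hσ'x' : σ' x' = a := Equiv.Perm.apply_inv_self σ' a
  have hσx : σ x = a := Equiv.Perm.apply_inv_self σ a
  rcases lt_trichotomy (σ' x) a with hb | hb | hb
  · have := IH (σ' x) hb
    have h1 : σ'⁻¹ (σ' x) = x := Equiv.Perm.inv_apply_self σ' x
    rw [h1] at this
    have : σ x = σ' x := by conv_lhs => rw [← this]; rw [Equiv.Perm.apply_inv_self]
    rw [hσx] at this
    exact absurd this.symm hb.ne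
  · have hxx : x = x' := by
      apply σ'.injective
      rw [hσ'x', hb]
    exact hlt.ne hxx
  · have := hσ' x x' hlt hAxx
    rw [hσ'x'] at this
    exact absurd (lt_trans hb this) (lt_irrefl a)

lemma BInc_unique {m : ℕ} (A : Fin m → ℕ) (σ σ' : Equiv.Perm (Fin m))
    (hσ : BInc A σ) (hσ' : BInc A σ') (hw : ∀ x, A (σ⁻¹ x) = A (σ'⁻¹ x)) :
    σ = σ' := by
  have key : ∀ n : ℕ, ∀ a : Fin m, (a : ℕ) = n → σ⁻¹ a = σ'⁻¹ a := by
    intro n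
    induction n using Nat.strong_induction_on with
    | _ n IH =>
      intro a ha
      have IH' : ∀ b : Fin m, b < a → σ⁻¹ b = σ'⁻¹ b := fun b hb =>
        IH (b : ℕ) (by rw [← ha]; exact hb) b rfl
      rcases lt_trichotomy (σ⁻¹ a) (σ'⁻¹ a) with h | h | h
      · exact absurd (BInc_unique_aux A σ σ' hσ hσ' hw a IH' h) (fun f => f)
      · exact h
      · exact absurd (BInc_unique_aux A σ' σ hσ' hσ (fun x => (hw x).symm) a
          (fun b hb => (IH' b hb).symm) h) (fun f => f)
  have hinv : σ⁻¹ = σ'⁻¹ := Equiv.ext (fun a => key (a : ℕ) a rfl)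
  calc σ = (σ⁻¹)⁻¹ := by simp
    _ = (σ'⁻¹)⁻¹ := by rw [hinv]
    _ = σ' := by simp

lemma BInc_word_eq {m : ℕ} (A : Fin m → ℕ) (σ ξ : Equiv.Perm (Fin m))
    (hξ : ∀ l, A (ξ l) = A l) (x : Fin m) : A ((σ * ξ)⁻¹ x) = A (σ⁻¹ x) := by
  rw [mul_inv_rev, Equiv.Perm.mul_apply]
  have h2 := hξ (ξ⁻¹ (σ⁻¹ x))
  rw [Equiv.Perm.apply_inv_self] at h2
  exact h2.symm ▸ rfl

lemma BInc_inDA_aux {m : ℕ} (A : Fin m → ℕ) : ∀ n : ℕ, ∀ σ ρ : Equiv.Perm (Fin m),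
    BInc A σ → (∃ ξ : Equiv.Perm (Fin m), (∀ l, A (ξ l) = A l) ∧ ρ = σ * ξ) →
    invNum ρ = n → invNum σ ≤ invNum ρ := by
  intro n
  induction n using Nat.strong_induction_on with
  | _ n IH =>
    intro σ ρ hσ ⟨ξ, hξ, hρ⟩ hn
    by_cases hB : BInc A ρ
    · have hw : ∀ x, A (σ⁻¹ x) = A (ρ⁻¹ x) := by
        intro x; rw [hρ, BInc_word_eq A σ ξ hξ]
      have : σ = ρ := BInc_unique A σ ρ hσ hB hw
      rw [this]
    · rw [BInc] at hB
      push_neg at hB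
      obtain ⟨i, j, hij, hA, hc⟩ := hB
      have hne : ρ i ≠ ρ j := fun e => hij.ne (ρ.injective e)
      have hlt : ρ j < ρ i := lt_of_le_of_ne hc hne.symm
      have hdec := invNum_swap_lt ρ i j hij hlt
      have hcoset : ∃ ξ' : Equiv.Perm (Fin m), (∀ l, A (ξ' l) = A l) ∧
          ρ * Equiv.swap i j = σ * ξ' := by
        refine ⟨ξ * Equiv.swap i j, ?_, by rw [hρ, mul_assoc]⟩
        intro l
        rw [Equiv.Perm.mul_apply, hξ, swap_stab A i j hA]
      have := IH (invNum (ρ * Equiv.swap i j)) (by omega) σ (ρ * Equiv.swap i j) hσ hcoset rfl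
      omega

lemma BInc_inDA {m : ℕ} (A : Fin m → ℕ) (σ : Equiv.Perm (Fin m)) (h : BInc A σ) :
    inDA A σ := fun ρ hρ => BInc_inDA_aux A (invNum ρ) σ ρ h hρ rfl

/-- value-adjacent swap step preserves BInc -/
lemma BInc_step {m : ℕ} (A : Fin m → ℕ) (σ : Equiv.Perm (Fin m)) (hσ : BInc A σ)
    (a b : Fin m) (hb : (b : ℕ) = a + 1) (hab : A (σ⁻¹ b) < A (σ⁻¹ a)) :
    BInc A (Equiv.swap a b * σ) := by
  have key : ∀ x y : Fin m, σ x = a → σ y = b → A x ≠ A y := by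
    intro x y hx hy hAxy
    have hx' : x = σ⁻¹ a := by rw [← hx, Equiv.Perm.inv_apply_self]
    have hy' : y = σ⁻¹ b := by rw [← hy, Equiv.Perm.inv_apply_self]
    rw [hx', hy'] at hAxy
    omega
  intro i j hij hA
  have hmono : (σ i : ℕ) < σ j := hσ i j hij hA
  have F1 : ¬((σ i : ℕ) = a ∧ (σ j : ℕ) = b) := by
    rintro ⟨h1, h2⟩; exact key i j (Fin.ext h1) (Fin.ext h2) hA
  have F2 : ¬((σ i : ℕ) = b ∧ (σ j : ℕ) = a) := by
    rintro ⟨h1, h2⟩; exact key j i (Fin.ext h2) (Fin.ext h1) hA.symm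
  simp only [Equiv.Perm.mul_apply]
  rw [Fin.lt_def, swap_val, swap_val]
  split_ifs <;> omega

def BChain {m : ℕ} (A : Fin m → ℕ) (x y : Equiv.Perm (Fin m)) : Prop :=
  ∃ (l : ℕ) (f : ℕ → Equiv.Perm (Fin m)),
    f 0 = x ∧ f l = y ∧ (∀ j ≤ l, BInc A (f j)) ∧
    ∀ j < l, (f (j + 1) * (f j)⁻¹).IsSwap

lemma BChain_refl {m : ℕ} (A : Fin m → ℕ) (x : Equiv.Perm (Fin m)) (hx : BInc A x) :
    BChain A x x :=
  ⟨0, fun _ => x, rfl, rfl, fun _ _ => hx, fun j hj => absurd hj (Nat.not_lt_zero j)⟩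

lemma BChain_trans {m : ℕ} (A : Fin m → ℕ) {x y z : Equiv.Perm (Fin m)}
    (h1 : BChain A x y) (h2 : BChain A y z) : BChain A x z := by
  obtain ⟨l1, f, hf0, hfl, hfB, hfS⟩ := h1
  obtain ⟨l2, g, hg0, hgl, hgB, hgS⟩ := h2
  refine ⟨l1 + l2, fun j => if j ≤ l1 then f j else g (j - l1), by simp [hf0], ?_, ?_, ?_⟩
  · rcases Nat.eq_zero_or_pos l2 with h | h
    · simp [h, hfl, ← hg0, ← hgl, h]
    · have : ¬(l1 + l2 ≤ l1) := by omega
      simp only [this, if_false]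
      rw [Nat.add_sub_cancel_left, hgl]
  · intro j hj
    by_cases hc : j ≤ l1
    · simp only [hc, if_true]; exact hfB j hc
    · simp only [hc, if_false]; exact hgB (j - l1) (by omega)
  · intro j hj
    by_cases hc : j + 1 ≤ l1
    · simp only [hc, if_true, (by omega : j ≤ l1), if_true]
      exact hfS j (by omega)
    · by_cases hc2 : j ≤ l1
      · have hjl1 : j = l1 := by omega
        simp only [hc, if_false, hc2, if_true]
        subst hjl1
        rw [hfl, ← hg0]
        have : j + 1 - j = 1 := by omega
        rw [this]
        exact hgS 0 (by omega)
      · simp only [hc, if_false, hc2, if_false]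
        have e1 : j + 1 - l1 = (j - l1) + 1 := by omega
        rw [e1]
        exact hgS (j - l1) (by omega)

lemma BChain_symm {m : ℕ} (A : Fin m → ℕ) {x y : Equiv.Perm (Fin m)}
    (h : BChain A x y) : BChain A y x := by
  obtain ⟨l, f, hf0, hfl, hfB, hfS⟩ := h
  refine ⟨l, fun j => f (l - j), by simp [hfl], by simp [hf0], ?_, ?_⟩
  · intro j hj; exact hfB (l - j) (by omega)
  · intro j hj
    have e1 : l - j = (l - (j + 1)) + 1 := by omega
    obtain ⟨u, v, huv, hs⟩ := hfS (l - (j + 1)) (by omega)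
    refine ⟨u, v, huv, ?_⟩
    have : f (l - (j + 1) + 1) * (f (l - (j + 1)))⁻¹ = Equiv.swap u v := hs
    show f (l - (j + 1)) * (f (l - j))⁻¹ = Equiv.swap u v
    rw [e1]
    calc f (l - (j + 1)) * (f (l - (j + 1) + 1))⁻¹
        = (f (l - (j + 1) + 1) * (f (l - (j + 1)))⁻¹)⁻¹ := by
          rw [mul_inv_rev, inv_inv]
      _ = (Equiv.swap u v)⁻¹ := by rw [this]
      _ = Equiv.swap u v := Equiv.swap_inv u v

lemma BChain_single {m : ℕ} (A : Fin m → ℕ) {x y : Equiv.Perm (Fin m)}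
    (hx : BInc A x) (hy : BInc A y) (a b : Fin m) (hab : a ≠ b)
    (h : y = Equiv.swap a b * x) : BChain A x y := by
  refine ⟨1, fun j => if j = 0 then x else y, by simp, by simp, ?_, ?_⟩
  · intro j hj
    by_cases hc : j = 0 <;> simp [hc, hx, hy]
  · intro j hj
    have hj0 : j = 0 := by omega
    subst hj0
    refine ⟨a, b, hab, ?_⟩
    show (if 0 + 1 = 0 then x else y) * (if (0:ℕ) = 0 then x else y)⁻¹ = Equiv.swap a b
    simp [h, mul_assoc]

/-- monotone from no adjacent descent -/
lemma mono_of_adj {m : ℕ} (w : Fin m → ℕ)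
    (h : ∀ a b : Fin m, (b : ℕ) = a + 1 → w a ≤ w b) : Monotone w := by
  intro x y hxy
  obtain ⟨n, hn⟩ : ∃ n, (y : ℕ) = x + n := ⟨(y : ℕ) - x, by
    have : (x : ℕ) ≤ y := hxy
    omega⟩
  clear hxy
  induction n generalizing y with
  | zero => have : x = y := Fin.ext (by omega); rw [this]
  | succ n IHn =>
    have hzm : (x : ℕ) + n < m := by have := y.isLt; omega
    set z : Fin m := ⟨(x : ℕ) + n, hzm⟩ with hz
    have h1 : w x ≤ w z := IHn (y := z) rfl
    have h2 : w z ≤ w y := h z y (by rw [hn]; rfl)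
    exact le_trans h1 h2

lemma descent {m : ℕ} (A : Fin m → ℕ) : ∀ n : ℕ, ∀ σ : Equiv.Perm (Fin m),
    BInc A σ → winv (fun x => A (σ⁻¹ x)) = n →
    ∃ t : Equiv.Perm (Fin m), BChain A σ t ∧ Monotone (fun x => A (t⁻¹ x)) := by
  intro n
  induction n using Nat.strong_induction_on with
  | _ n IH =>
    intro σ hσ hn
    by_cases h : ∃ a b : Fin m, (b : ℕ) = a + 1 ∧ A (σ⁻¹ b) < A (σ⁻¹ a)
    · obtain ⟨a, b, hb, hab⟩ := h
      have hane : a ≠ b := fun e => by rw [e] at hb; omega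
      set σ' := Equiv.swap a b * σ with hσ'def
      have hB' : BInc A σ' := BInc_step A σ hσ a b hb hab
      set w : Fin m → ℕ := fun x => A (σ⁻¹ x) with hw
      set w' : Fin m → ℕ := fun x => A (σ'⁻¹ x) with hw'
      have hword : w' = w ∘ Equiv.swap a b := by
        funext x
        simp only [hw', hσ'def, mul_inv_rev, Equiv.Perm.mul_apply, Function.comp_apply, hw]
        rw [Equiv.swap_inv]
      have hwv : winv w = winv w' + 1 := by
        have h1 : w' a < w' b := by
          rw [hword]
          simp only [Function.comp_apply, Equiv.swap_apply_left, Equiv.swap_apply_right]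
          exact hab
        have := winv_comp_swap w' a b hb h1
        have h2 : w' ∘ Equiv.swap a b = w := by
          rw [hword]
          funext x
          simp [Equiv.swap_apply_self]
        rwa [h2] at this
      obtain ⟨t, hct, hmt⟩ := IH (winv w') (by omega) σ' hB' rfl
      exact ⟨t, BChain_trans A (BChain_single A hσ hB' a b hane rfl) hct, hmt⟩
    · push_neg at h
      refine ⟨σ, BChain_refl A σ hσ, mono_of_adj _ ?_⟩
      intro a b hb
      exact h a b hb

/-- any two elements τ', τ of D_A are connected by a chain in D_A in which
consecutive elements differ (on the left) by a transposition. -/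
theorem stmt_3 (m : ℕ) (A : Fin m → ℕ) (τ τ' : Equiv.Perm (Fin m))
    (hτ : inDA A τ) (hτ' : inDA A τ') :
    ∃ (l : ℕ) (f : ℕ → Equiv.Perm (Fin m)),
      f 0 = τ' ∧ f l = τ ∧ (∀ j ≤ l, inDA A (f j)) ∧
      ∀ j < l, (f (j + 1) * (f j)⁻¹).IsSwap := by
  have hB := inDA_BInc A τ hτ
  have hB' := inDA_BInc A τ' hτ'
  obtain ⟨t, ch, mono⟩ := descent A _ τ hB rfl
  obtain ⟨t', ch', mono'⟩ := descent A _ τ' hB' rfl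
  have hBt : BInc A t := by
    obtain ⟨l, f, hf0, hfl, hfB, _⟩ := ch
    rw [← hfl]; exact hfB l le_rfl
  have hBt' : BInc A t' := by
    obtain ⟨l, f, hf0, hfl, hfB, _⟩ := ch'
    rw [← hfl]; exact hfB l le_rfl
  have hwe : (A ∘ ⇑(t⁻¹) : Fin m → ℕ) = A ∘ ⇑(t'⁻¹) :=
    Tuple.unique_monotone mono mono'
  have htt : t = t' := BInc_unique A t t' hBt hBt' (fun x => congrFun hwe x)
  have full : BChain A τ' τ := BChain_trans A ch' (htt ▸ BChain_symm A ch)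
  obtain ⟨l, f, hf0, hfl, hfB, hfS⟩ := full
  exact ⟨l, f, hf0, hfl, fun j hj => BInc_inDA A _ (hfB j hj), hfS⟩
end

section
/- For weakly increasing ī ∈ 𝓦_m and τ ∈ D_{j̄}, σ ∈ D_ī, the matrix tensor e_{τ(j̄)τ(ī)} applied to σ(v(ī)) equals τ(v(j̄)) if τ and σ lie in the same left coset of H_ī, and equals 0 otherwise. -/
/-- D_ī ⊂ S_m: minimal-inversion left coset representatives of the stabilizer H_ī -/
def Dset {N m : ℕ} (i : Fin m → Fin (N + 1)) : Finset (Equiv.Perm (Fin m)) :=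
  Finset.univ.filter fun σ =>
    ∀ ρ : Equiv.Perm (Fin m),
      (∃ ξ : Equiv.Perm (Fin m), (∀ l, i (ξ l) = i l) ∧ ρ = σ * ξ) →
      invNum σ ≤ invNum ρ

/-- basis tensor I_{i_1} ⊗ ⋯ ⊗ I_{i_m}, as a delta function on basis indices -/
noncomputable def deltaT {N m : ℕ} (i : Fin m → Fin (N + 1)) :
    (Fin m → Fin (N + 1)) → ℂ :=
  fun x => if x = i then 1 else 0

/-- the matrix-unit tensor e_{a_1 b_1} ⊗ ⋯ ⊗ e_{a_m b_m} -/
noncomputable def eMat {N m : ℕ} (a b : Fin m → Fin (N + 1)) :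
    ((Fin m → Fin (N + 1)) → ℂ) → ((Fin m → Fin (N + 1)) → ℂ) :=
  fun f y => if y = a then f b else 0

/-- for τ ∈ D_{j̄} and σ ∈ D_ī, the tensor e_{τ(j̄)τ(ī)} maps σ(v(ī))
to τ(v(j̄)) if τ and σ lie in the same left coset of H_ī, and to 0 otherwise. -/
theorem stmt_17 (N m : ℕ) (i j : Fin m → Fin (N + 1)) (hi : Monotone i)
    (hj : Monotone j) (τ σ : Equiv.Perm (Fin m))
    (hτ : τ ∈ Dset j) (hσ : σ ∈ Dset i) :
    ((∃ ξ : Equiv.Perm (Fin m), (∀ l, i (ξ l) = i l) ∧ τ = σ * ξ) →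
      eMat (j ∘ ⇑τ⁻¹) (i ∘ ⇑τ⁻¹) (deltaT (i ∘ ⇑σ⁻¹)) = deltaT (j ∘ ⇑τ⁻¹)) ∧
    (¬ (∃ ξ : Equiv.Perm (Fin m), (∀ l, i (ξ l) = i l) ∧ τ = σ * ξ) →
      eMat (j ∘ ⇑τ⁻¹) (i ∘ ⇑τ⁻¹) (deltaT (i ∘ ⇑σ⁻¹)) = 0) := by
  constructor
  · rintro ⟨ξ, hξ, rfl⟩
    have heq : i ∘ ⇑(σ * ξ)⁻¹ = i ∘ ⇑σ⁻¹ := by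
      funext x
      simp only [Function.comp_apply, mul_inv_rev, Equiv.Perm.mul_apply]
      have := hξ (ξ⁻¹ (σ⁻¹ x))
      simpa using this.symm
    funext y
    have heq' : i ∘ ⇑ξ⁻¹ ∘ ⇑σ⁻¹ = i ∘ ⇑σ⁻¹ := by
      simpa [Function.comp] using heq
    simp only [Equiv.Perm.inv_def] at heq'
    simp [eMat, deltaT, heq']
  · intro h
    have hne : i ∘ ⇑τ⁻¹ ≠ i ∘ ⇑σ⁻¹ := by
      intro heq
      apply h
      refine ⟨σ⁻¹ * τ, fun l => ?_, by group⟩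
      have := congrFun heq (τ l)
      simpa [Function.comp] using this.symm
    funext y
    simp only [Equiv.Perm.inv_def] at hne
    simp [eMat, deltaT, hne]
end
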